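/- Let r, s, b₁, b₂ ∈ ℝ. Suppose there exists a constant C > 0 such that for all nonnegative measurable F, G : ℤ × ℝ → [0,∞): (∑_{n∈ℤ} ∫_ℝ n² ⟨n⟩^{2s} ⟨τ⟩^{−1} ((F ⋆ G)(n,τ))² dτ)^{1/2} ≤ C · N^{r,b₁}(F) · N^{r,b₂}(G). Then s ≤ 2r − 1 and s ≤ r, i.e. s ≤ min{2r − 1, r}. (Necessity of the index conditions in the bilinear estimate for the coupling term ∂_x(|u|²): the conclusion is obtained by testing on F(n,τ) = χ_{n=N} χ_{[−1,1]}(τ+n²), G(n,τ) = χ_{n=−N} χ_{[−1,1]}(τ+n²) and on F(n,τ) = χ_{n=0} χ_{[−1,1]}(τ+n²), G(n,τ) = χ_{n=N} χ_{[−1,1]}(τ+n²) with N ≫ 1.) -/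

import Mathlib

open MeasureTheory

noncomputable section

/-- Write `⟨x⟩ = 1 + |x|`. -/
def jap (x : ℝ) : ℝ := 1 + |x|

/-- Schrödinger Bourgain weighted norm
`N^{r,b}(F) = (∑_{n∈ℤ} ∫_ℝ ⟨n⟩^{2r} ⟨τ + n²⟩^{2b} F(n,τ)² dτ)^{1/2}`. -/
def Nnorm (r b : ℝ) (F : ℤ → ℝ → ℝ) : ℝ :=
  Real.sqrt (∑' n : ℤ, ∫ τ : ℝ,
    jap (n : ℝ) ^ (2 * r) * jap (τ + (n : ℝ) ^ 2) ^ (2 * b) * (F n τ) ^ 2)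

/-- Twisted convolution `(F ⋆ G)(n,τ) = ∑_{n₁∈ℤ} ∫_ℝ F(n₁,τ₁) G(n₁ − n, τ₁ − τ) dτ₁`. -/
def tconv (F G : ℤ → ℝ → ℝ) (n : ℤ) (τ : ℝ) : ℝ :=
  ∑' n₁ : ℤ, ∫ τ₁ : ℝ, F n₁ τ₁ * G (n₁ - n) (τ₁ - τ)

-- auxiliary
def phi : ℝ → ℝ := Set.indicator (Set.Icc (-1 : ℝ) 1) 1

lemma phi_nonneg (x : ℝ) : 0 ≤ phi x := Set.indicator_nonneg (fun _ _ => zero_le_one) x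

lemma phi_le_one (x : ℝ) : phi x ≤ 1 := Set.indicator_le_self' (fun _ _ => zero_le_one) x |>.trans (by by_cases h : x ∈ Set.Icc (-1:ℝ) 1 <;> simp [phi, Set.indicator_apply, h])

lemma jap_pos (x : ℝ) : 0 < jap x := by
  have := abs_nonneg x; unfold jap; linarith

lemma one_le_jap (x : ℝ) : 1 ≤ jap x := by
  have := abs_nonneg x; unfold jap; linarith

lemma phi_meas : Measurable phi :=
  (measurable_const.indicator measurableSet_Icc)

def testF (a : ℤ) : ℤ → ℝ → ℝ := fun n τ => if n = a then phi (τ + (a : ℝ) ^ 2) else 0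

lemma testF_nonneg (a n : ℤ) (τ : ℝ) : 0 ≤ testF a n τ := by
  unfold testF; split
  · exact phi_nonneg _
  · exact le_refl 0

lemma testF_meas (a : ℤ) : Measurable (Function.uncurry (testF a)) := by
  have : Function.uncurry (testF a) = fun p : ℤ × ℝ =>
      if p.1 = a then phi (p.2 + (a : ℝ) ^ 2) else 0 := rfl
  rw [this]
  apply Measurable.ite
  · exact measurable_fst (measurableSet_singleton a)
  · exact phi_meas.comp (measurable_snd.add_const _)
  · exact measurable_const

lemma phi_mul_phi (A c τ τ₁ : ℝ) :
    phi (τ₁ + A) * phi (τ₁ - τ + c) =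
      (Set.Icc (max (-1 - A) (τ - c - 1)) (min (1 - A) (τ - c + 1))).indicator 1 τ₁ := by
  simp only [phi, Set.indicator_apply, Set.mem_Icc, Pi.one_apply, max_le_iff, le_min_iff]
  by_cases h1 : -1 ≤ τ₁ + A ∧ τ₁ + A ≤ 1 <;>
    by_cases h2 : -1 ≤ τ₁ - τ + c ∧ τ₁ - τ + c ≤ 1
  · rw [if_pos h1, if_pos h2, if_pos
      ⟨⟨by linarith [h1.1], by linarith [h2.1]⟩, by linarith [h1.2], by linarith [h2.2]⟩]
    norm_num
  · rw [if_neg h2, mul_zero, if_neg]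
    intro h; exact h2 ⟨by linarith [h.1.2], by linarith [h.2.2]⟩
  · rw [if_neg h1, zero_mul, if_neg]
    intro h; exact h1 ⟨by linarith [h.1.1], by linarith [h.2.1]⟩
  · rw [if_neg h1, zero_mul, if_neg]
    intro h; exact h1 ⟨by linarith [h.1.1], by linarith [h.2.1]⟩

lemma integral_phi_mul (A c τ : ℝ) :
    (∫ τ₁ : ℝ, phi (τ₁ + A) * phi (τ₁ - τ + c))
      = max (min (1 - A) (τ - c + 1) - max (-1 - A) (τ - c - 1)) 0 := by
  simp_rw [phi_mul_phi]
  rw [integral_indicator_one measurableSet_Icc, Real.volume_real_Icc]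

lemma tconv_testF (a b' n : ℤ) (τ : ℝ) :
    tconv (testF a) (testF b') n τ =
      if n = a - b' then
        max (min (1 - (a:ℝ)^2) (τ - (b':ℝ)^2 + 1)
          - max (-1 - (a:ℝ)^2) (τ - (b':ℝ)^2 - 1)) 0
      else 0 := by
  unfold tconv
  rw [tsum_eq_single a]
  · by_cases hn : n = a - b'
    · have hb : a - n = b' := by omega
      rw [if_pos hn]
      simp only [testF, hb, if_pos rfl]
      exact integral_phi_mul _ _ _
    · have hb : a - n ≠ b' := by omega
      simp [testF, hb, hn]
  · intro n₁ hn₁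
    simp [testF, hn₁]

lemma jap_continuous : Continuous jap := by
  unfold jap; continuity

lemma Nnorm_testF_le (r b : ℝ) (a : ℤ) :
    Nnorm r b (testF a) ≤
      Real.sqrt (jap (a:ℝ) ^ (2*r) * max 1 ((2:ℝ) ^ (2*b)) * 2) := by
  unfold Nnorm
  apply Real.sqrt_le_sqrt
  rw [tsum_eq_single a (by intro n hn; simp [testF, hn])]
  simp only [testF, if_pos rfl]
  set A := (a:ℝ)^2 with hA
  set c : ℝ := jap (a:ℝ) ^ (2*r) * max 1 ((2:ℝ) ^ (2*b)) with hc
  have hc0 : 0 ≤ c := mul_nonneg (Real.rpow_nonneg (jap_pos _).le _)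
    (le_trans zero_le_one (le_max_left _ _))
  have hgint : Integrable (fun τ : ℝ => c * (Set.Icc (-1 - A) (1 - A)).indicator 1 τ) := by
    refine Integrable.const_mul ?_ c
    rw [integrable_indicator_iff measurableSet_Icc]
    exact integrableOn_const (by rw [Real.volume_Icc]; exact ENNReal.ofReal_ne_top)
  have hle : ∀ τ : ℝ, jap (a:ℝ) ^ (2*r) * jap (τ + A) ^ (2*b) * (phi (τ + A))^2
      ≤ c * (Set.Icc (-1 - A) (1 - A)).indicator 1 τ := by
    intro τ
    by_cases hm : τ + A ∈ Set.Icc (-1:ℝ) 1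
    · have hmem : τ ∈ Set.Icc (-1 - A) (1 - A) := by
        obtain ⟨h1, h2⟩ := hm; exact ⟨by linarith, by linarith⟩
      rw [Set.indicator_of_mem hmem, Pi.one_apply, mul_one]
      have hphi : phi (τ + A) = 1 := Set.indicator_of_mem hm 1
      rw [hphi, one_pow, mul_one, hc]
      refine mul_le_mul_of_nonneg_left ?_ (Real.rpow_nonneg (jap_pos _).le _)
      have hj1 : 1 ≤ jap (τ + A) := one_le_jap _
      have hj2 : jap (τ + A) ≤ 2 := by
        have := abs_le.mpr ⟨hm.1, hm.2⟩; unfold jap; linarith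
      rcases le_or_gt 0 (2*b) with hb | hb
      · exact le_trans (Real.rpow_le_rpow (by linarith) hj2 hb) (le_max_right _ _)
      · exact le_trans (Real.rpow_le_one_of_one_le_of_nonpos hj1 hb.le) (le_max_left _ _)
    · have hphi : phi (τ + A) = 0 := Set.indicator_of_notMem hm 1
      rw [hphi]
      have : (0:ℝ) ≤ (Set.Icc (-1 - A) (1 - A)).indicator 1 τ :=
        Set.indicator_nonneg (fun _ _ => zero_le_one) τ
      nlinarith
  have hfint : Integrable (fun τ : ℝ =>
      jap (a:ℝ) ^ (2*r) * jap (τ + A) ^ (2*b) * (phi (τ + A))^2) := by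
    refine hgint.mono' ?_ (Filter.Eventually.of_forall fun τ => ?_)
    · refine (Measurable.mul ?_ ?_).aestronglyMeasurable
      · exact ((jap_continuous.comp (continuous_id.add continuous_const)).rpow_const
          (fun x => Or.inl (jap_pos _).ne')).measurable.const_mul _
      · exact ((phi_meas.comp (measurable_id.add_const A)).pow_const 2)
    · rw [Real.norm_eq_abs, abs_of_nonneg (mul_nonneg (mul_nonneg (Real.rpow_nonneg (jap_pos _).le _) (Real.rpow_nonneg (jap_pos _).le _)) (sq_nonneg _))]
      exact hle τ
  calc ∫ τ : ℝ, jap (a:ℝ) ^ (2*r) * jap (τ + A) ^ (2*b) * (phi (τ + A))^2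
      ≤ ∫ τ : ℝ, c * (Set.Icc (-1 - A) (1 - A)).indicator 1 τ :=
        integral_mono hfint hgint hle
    _ = c * 2 := by
        rw [MeasureTheory.integral_const_mul, integral_indicator_one measurableSet_Icc, Real.volume_real_Icc]
        norm_num

lemma lhs_lower (s : ℝ) (a b' : ℤ) :
    ((a:ℝ) - b')^2 * jap ((a:ℝ) - b') ^ (2*s) * (2 + |(b':ℝ)^2 - (a:ℝ)^2|)⁻¹
      ≤ ∑' n : ℤ, ∫ τ : ℝ, (n : ℝ) ^ 2 * jap (n : ℝ) ^ (2 * s) * jap τ ^ (-1 : ℝ)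
          * (tconv (testF a) (testF b') n τ) ^ 2 := by
  set A := (a:ℝ)^2 with hA
  set c := (b':ℝ)^2 with hcdef
  set m := c - A with hm
  set h : ℝ → ℝ := fun τ => max (min (1 - A) (τ - c + 1) - max (-1 - A) (τ - c - 1)) 0 with hh
  set K : ℝ := ((a:ℝ) - b')^2 * jap ((a:ℝ) - b') ^ (2*s) with hK
  have hK0 : 0 ≤ K := mul_nonneg (sq_nonneg _) (Real.rpow_nonneg (jap_pos _).le _)
  rw [tsum_eq_single (a - b') (by
    intro n hn
    simp [tconv_testF, hn])]
  have hcast : ((a - b' : ℤ) : ℝ) = (a:ℝ) - b' := by push_cast; ring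
  have hconv : ∀ τ : ℝ, tconv (testF a) (testF b') (a - b') τ = h τ := by
    intro τ; rw [tconv_testF, if_pos rfl]
  simp only [hcast, hconv]
  -- now goal : K * (2+|m|)⁻¹ ≤ ∫ τ, K-shape * jap τ ^ (-1) * h τ ^ 2
  have hhcont : Continuous h := by
    apply Continuous.max _ continuous_const
    exact ((continuous_const.min (by continuity)).sub (continuous_const.max (by continuity)))
  have hhzero : ∀ τ : ℝ, τ ∉ Set.Icc (m - 2) (m + 2) → h τ = 0 := by
    intro τ hτ
    rw [Set.mem_Icc, not_and_or, not_le, not_le] at hτ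
    apply max_eq_right
    rcases hτ with hτ | hτ
    · have h1 : τ - c + 1 ≤ -1 - A + 0 := by simp only [hm] at hτ; linarith
      have := min_le_right (1 - A) (τ - c + 1)
      have := le_max_left (-1 - A) (τ - c - 1)
      linarith
    · have h1 : 1 - A ≤ τ - c - 1 := by simp only [hm] at hτ; linarith
      have := min_le_left (1 - A) (τ - c + 1)
      have := le_max_right (-1 - A) (τ - c - 1)
      linarith
  have hfcont : Continuous (fun τ : ℝ => ((a:ℝ) - b')^2 * jap ((a:ℝ) - b') ^ (2*s)
      * jap τ ^ (-1 : ℝ) * h τ ^ 2) := by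
    refine ((continuous_const.mul ?_).mul (hhcont.pow 2))
    exact jap_continuous.rpow_const (fun x => Or.inl (jap_pos _).ne')
  have hfint : Integrable (fun τ : ℝ => ((a:ℝ) - b')^2 * jap ((a:ℝ) - b') ^ (2*s)
      * jap τ ^ (-1 : ℝ) * h τ ^ 2) := by
    refine hfcont.integrable_of_hasCompactSupport ?_
    refine HasCompactSupport.intro (isCompact_Icc (a := m - 2) (b := m + 2)) ?_
    intro τ hτ
    rw [hhzero τ hτ]
    ring
  have hgint : Integrable (fun τ : ℝ =>
      K * (2 + |m|)⁻¹ * (Set.Icc m (m + 1)).indicator 1 τ) := by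
    refine Integrable.const_mul ?_ _
    rw [integrable_indicator_iff measurableSet_Icc]
    exact integrableOn_const (by rw [Real.volume_Icc]; exact ENNReal.ofReal_ne_top)
  have hle : ∀ τ : ℝ, K * (2 + |m|)⁻¹ * (Set.Icc m (m + 1)).indicator 1 τ
      ≤ ((a:ℝ) - b')^2 * jap ((a:ℝ) - b') ^ (2*s) * jap τ ^ (-1 : ℝ) * h τ ^ 2 := by
    intro τ
    by_cases hmem : τ ∈ Set.Icc m (m + 1)
    · rw [Set.indicator_of_mem hmem, Pi.one_apply, mul_one]
      obtain ⟨h1, h2⟩ := hmem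
      have hh1 : 1 ≤ h τ := by
        have hmin : min (1 - A) (τ - c + 1) = 1 - A := min_eq_left (by simp only [hm] at h1; linarith)
        have hmax : max (-1 - A) (τ - c - 1) = τ - c - 1 := max_eq_right (by simp only [hm] at h1; linarith)
        have hht : h τ = max (min (1 - A) (τ - c + 1) - max (-1 - A) (τ - c - 1)) 0 := rfl
        rw [hht, hmin, hmax]
        simp only [hm] at h2
        refine le_max_of_le_left (by linarith)
      have hj : jap τ ≤ 2 + |m| := by
        have habs : |τ| ≤ |m| + 1 :=
          abs_le.mpr ⟨by linarith [neg_abs_le m], by linarith [le_abs_self m]⟩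
        unfold jap; linarith
      have hinv : (2 + |m|)⁻¹ ≤ jap τ ^ (-1 : ℝ) := by
        rw [Real.rpow_neg_one]
        exact inv_anti₀ (jap_pos τ) hj
      calc K * (2 + |m|)⁻¹ ≤ K * jap τ ^ (-1 : ℝ) :=
            mul_le_mul_of_nonneg_left hinv hK0
        _ = K * jap τ ^ (-1 : ℝ) * 1 ^ 2 := by ring
        _ ≤ K * jap τ ^ (-1 : ℝ) * h τ ^ 2 := by
            refine mul_le_mul_of_nonneg_left ?_ (mul_nonneg hK0 (Real.rpow_nonneg (jap_pos _).le _))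
            rw [one_pow]
            nlinarith
        _ = ((a:ℝ) - b')^2 * jap ((a:ℝ) - b') ^ (2*s) * jap τ ^ (-1 : ℝ) * h τ ^ 2 := by
            rw [hK]
    · rw [Set.indicator_of_notMem hmem, mul_zero]
      exact mul_nonneg (mul_nonneg (mul_nonneg (sq_nonneg _)
        (Real.rpow_nonneg (jap_pos _).le _)) (Real.rpow_nonneg (jap_pos _).le _)) (sq_nonneg _)
  calc K * (2 + |m|)⁻¹
      = ∫ τ : ℝ, K * (2 + |m|)⁻¹ * (Set.Icc m (m + 1)).indicator 1 τ := by
        rw [MeasureTheory.integral_const_mul, integral_indicator_one measurableSet_Icc,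
          Real.volume_real_Icc]
        norm_num
    _ ≤ ∫ τ : ℝ, ((a:ℝ) - b')^2 * jap ((a:ℝ) - b') ^ (2*s) * jap τ ^ (-1 : ℝ) * h τ ^ 2 :=
        integral_mono hgint hfint hle

lemma exponent_le (p q K : ℝ) (hK : 0 < K)
    (h : ∀ N : ℕ, 1 ≤ N → (1 + (N:ℝ)) ^ p ≤ K * (1 + (N:ℝ)) ^ q) : p ≤ q := by
  by_contra hpq
  push_neg at hpq
  have h2 : ∀ N : ℕ, 1 ≤ N → (1 + (N:ℝ)) ^ (p - q) ≤ K := by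
    intro N hN
    have hx : (0:ℝ) < 1 + N := by positivity
    rw [Real.rpow_sub hx, div_le_iff₀ (Real.rpow_pos_of_pos hx q)]
    exact h N hN
  have ht : Filter.Tendsto (fun N : ℕ => (1 + (N:ℝ)) ^ (p - q)) Filter.atTop Filter.atTop :=
    (tendsto_rpow_atTop (by linarith)).comp
      (Filter.tendsto_atTop_add_const_left _ 1 tendsto_natCast_atTop_atTop)
  obtain ⟨N, hN1, hN2⟩ := ((ht.eventually_gt_atTop K).and (Filter.eventually_ge_atTop 1)).exists
  exact absurd (h2 N hN2) (not_le.mpr hN1)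

lemma Nnorm_nonneg (r b : ℝ) (F : ℤ → ℝ → ℝ) : 0 ≤ Nnorm r b F := by
  unfold Nnorm; exact Real.sqrt_nonneg _

lemma squared_bound (r s b₁ b₂ C : ℝ)
    (hest : ∀ F G : ℤ → ℝ → ℝ,
      (∀ n τ, 0 ≤ F n τ) → (∀ n τ, 0 ≤ G n τ) →
      Measurable (Function.uncurry F) → Measurable (Function.uncurry G) →
      Real.sqrt (∑' n : ℤ, ∫ τ : ℝ,
          (n : ℝ) ^ 2 * jap (n : ℝ) ^ (2 * s) * jap τ ^ (-1 : ℝ) * (tconv F G n τ) ^ 2)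
        ≤ C * Nnorm r b₁ F * Nnorm r b₂ G) (hC : 0 ≤ C) (a b' : ℤ) :
    ((a:ℝ) - b')^2 * jap ((a:ℝ) - b') ^ (2*s) * (2 + |(b':ℝ)^2 - (a:ℝ)^2|)⁻¹
      ≤ C^2 * (jap (a:ℝ) ^ (2*r) * max 1 ((2:ℝ)^(2*b₁)) * 2)
          * (jap (b':ℝ) ^ (2*r) * max 1 ((2:ℝ)^(2*b₂)) * 2) := by
  set X := ((a:ℝ) - b')^2 * jap ((a:ℝ) - b') ^ (2*s) * (2 + |(b':ℝ)^2 - (a:ℝ)^2|)⁻¹ with hX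
  set B₁ := jap (a:ℝ) ^ (2*r) * max 1 ((2:ℝ)^(2*b₁)) * 2 with hB₁
  set B₂ := jap (b':ℝ) ^ (2*r) * max 1 ((2:ℝ)^(2*b₂)) * 2 with hB₂
  have hB₁0 : 0 ≤ B₁ := mul_nonneg (mul_nonneg (Real.rpow_nonneg (jap_pos _).le _)
    (le_trans zero_le_one (le_max_left _ _))) (by norm_num)
  have hB₂0 : 0 ≤ B₂ := mul_nonneg (mul_nonneg (Real.rpow_nonneg (jap_pos _).le _)
    (le_trans zero_le_one (le_max_left _ _))) (by norm_num)
  have hX0 : 0 ≤ X := mul_nonneg (mul_nonneg (sq_nonneg _)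
    (Real.rpow_nonneg (jap_pos _).le _)) (inv_nonneg.mpr (by positivity))
  have h0 : Real.sqrt X ≤ Real.sqrt (∑' n : ℤ, ∫ τ : ℝ,
      (n : ℝ) ^ 2 * jap (n : ℝ) ^ (2 * s) * jap τ ^ (-1 : ℝ)
        * (tconv (testF a) (testF b') n τ) ^ 2) :=
    Real.sqrt_le_sqrt (lhs_lower s a b')
  have h1 := hest (testF a) (testF b') (testF_nonneg a) (testF_nonneg b')
    (testF_meas a) (testF_meas b')
  have h2 : C * Nnorm r b₁ (testF a) * Nnorm r b₂ (testF b')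
      ≤ C * Real.sqrt B₁ * Real.sqrt B₂ := by
    calc C * Nnorm r b₁ (testF a) * Nnorm r b₂ (testF b')
        ≤ C * Real.sqrt B₁ * Nnorm r b₂ (testF b') :=
          mul_le_mul_of_nonneg_right
            (mul_le_mul_of_nonneg_left (Nnorm_testF_le r b₁ a) hC) (Nnorm_nonneg _ _ _)
      _ ≤ C * Real.sqrt B₁ * Real.sqrt B₂ :=
          mul_le_mul_of_nonneg_left (Nnorm_testF_le r b₂ b')
            (mul_nonneg hC (Real.sqrt_nonneg _))
  have hfin : Real.sqrt X ≤ C * Real.sqrt B₁ * Real.sqrt B₂ := h0.trans (h1.trans h2)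
  calc X = Real.sqrt X ^ 2 := (Real.sq_sqrt hX0).symm
    _ ≤ (C * Real.sqrt B₁ * Real.sqrt B₂) ^ 2 :=
        pow_le_pow_left₀ (Real.sqrt_nonneg _) hfin 2
    _ = C^2 * B₁ * B₂ := by
        rw [mul_pow, mul_pow, Real.sq_sqrt hB₁0, Real.sq_sqrt hB₂0]


/-- Necessity of the index condition `s ≤ min{2r − 1, r}` in the bilinear estimate for the
coupling term `∂ₓ(|u|²)`. -/
theorem bilinear_estimate_dx_necessity (r s b₁ b₂ : ℝ)
    (H : ∃ C > 0, ∀ F G : ℤ → ℝ → ℝ,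
      (∀ n τ, 0 ≤ F n τ) → (∀ n τ, 0 ≤ G n τ) →
      Measurable (Function.uncurry F) → Measurable (Function.uncurry G) →
      Real.sqrt (∑' n : ℤ, ∫ τ : ℝ,
          (n : ℝ) ^ 2 * jap (n : ℝ) ^ (2 * s) * jap τ ^ (-1 : ℝ) * (tconv F G n τ) ^ 2)
        ≤ C * Nnorm r b₁ F * Nnorm r b₂ G) :
    s ≤ 2 * r - 1 ∧ s ≤ r := by
  obtain ⟨C, hC, hest⟩ := H
  have hM₁0 : (0:ℝ) < max 1 ((2:ℝ)^(2*b₁)) := lt_of_lt_of_le one_pos (le_max_left _ _)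
  have hM₂0 : (0:ℝ) < max 1 ((2:ℝ)^(2*b₂)) := lt_of_lt_of_le one_pos (le_max_left _ _)
  constructor
  · -- s ≤ 2r - 1
    have hcs0 : (0:ℝ) < min 1 ((2:ℝ)^(2*s)) := lt_min one_pos (Real.rpow_pos_of_pos two_pos _)
    set cs := min (1:ℝ) ((2:ℝ)^(2*s)) with hcs
    have key : ∀ N : ℕ, 1 ≤ N →
        (1 + (N:ℝ)) ^ (2*s + 2)
          ≤ (8 * C^2 * max 1 ((2:ℝ)^(2*b₁)) * max 1 ((2:ℝ)^(2*b₂)) / cs)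
              * (1 + (N:ℝ)) ^ (2*r + 2*r) := by
      intro N hN
      have hN1 : (1:ℝ) ≤ N := by exact_mod_cast hN
      set x := 1 + (N:ℝ) with hx
      have hx0 : (0:ℝ) < x := by positivity
      have hsb := squared_bound r s b₁ b₂ C hest hC.le (N:ℤ) (-(N:ℤ))
      push_cast at hsb
      have e3 : (N:ℝ) - -(N:ℝ) = 2*(N:ℝ) := by ring
      have e4 : |(-(N:ℝ))^2 - (N:ℝ)^2| = 0 := by rw [neg_pow]; norm_num
      have e5 : jap (-(N:ℝ)) = x := by
        unfold jap; rw [abs_neg, abs_of_nonneg (Nat.cast_nonneg N)]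
      have e6 : jap ((N:ℝ)) = x := by unfold jap; rw [abs_of_nonneg (Nat.cast_nonneg N)]
      have e7 : jap (2*(N:ℝ)) = 1 + 2*(N:ℝ) := by
        unfold jap; rw [abs_of_nonneg (by positivity)]
      rw [e3, e4, e5, e6, e7] at hsb
      set y := 1 + 2*(N:ℝ) with hy
      have hy0 : (0:ℝ) < y := by positivity
      have hxy : x ≤ y := by rw [hx, hy]; have : (0:ℝ) ≤ N := Nat.cast_nonneg N; linarith
      have hy2x : y ≤ 2*x := by rw [hx, hy]; linarith
      have hmono : cs * x^(2*s) ≤ y^(2*s) := by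
        rcases le_or_gt 0 (2*s) with hs2 | hs2
        · calc cs * x^(2*s) ≤ 1 * x^(2*s) :=
              mul_le_mul_of_nonneg_right (min_le_left _ _) (Real.rpow_nonneg hx0.le _)
            _ = x^(2*s) := one_mul _
            _ ≤ y^(2*s) := Real.rpow_le_rpow hx0.le hxy hs2
        · calc cs * x^(2*s) ≤ (2:ℝ)^(2*s) * x^(2*s) :=
              mul_le_mul_of_nonneg_right (min_le_right _ _) (Real.rpow_nonneg hx0.le _)
            _ = (2*x)^(2*s) := (Real.mul_rpow (by norm_num) hx0.le).symm
            _ ≤ y^(2*s) := Real.rpow_le_rpow_of_nonpos hy0 hy2x hs2.le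
      have hx2 : x^2 ≤ (2*(N:ℝ))^2 := pow_le_pow_left₀ hx0.le (by rw [hx]; linarith) 2
      have main : cs * x^(2*s + 2)
          ≤ 2 * (C^2 * (x^(2*r) * max 1 ((2:ℝ)^(2*b₁)) * 2)
              * (x^(2*r) * max 1 ((2:ℝ)^(2*b₂)) * 2)) := by
        calc cs * x^(2*s + 2) = (cs * x^(2*s)) * x^2 := by
              rw [Real.rpow_add hx0, ← Real.rpow_natCast x 2]; push_cast; ring
          _ ≤ y^(2*s) * (2*(N:ℝ))^2 :=
              mul_le_mul hmono hx2 (sq_nonneg _)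
                (Real.rpow_nonneg hy0.le _)
          _ = 2 * ((2*(N:ℝ))^2 * y^(2*s) * (2+0)⁻¹) := by
              rw [show ((2:ℝ)+0)⁻¹ = 1/2 by norm_num]; ring
          _ ≤ 2 * (C^2 * (x^(2*r) * max 1 ((2:ℝ)^(2*b₁)) * 2)
              * (x^(2*r) * max 1 ((2:ℝ)^(2*b₂)) * 2)) := by linarith
      calc x^(2*s + 2) = (cs * x^(2*s + 2)) / cs := by field_simp
        _ ≤ (2 * (C^2 * (x^(2*r) * max 1 ((2:ℝ)^(2*b₁)) * 2)
              * (x^(2*r) * max 1 ((2:ℝ)^(2*b₂)) * 2))) / cs :=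
            (div_le_div_iff_of_pos_right hcs0).mpr main
        _ = (8 * C^2 * max 1 ((2:ℝ)^(2*b₁)) * max 1 ((2:ℝ)^(2*b₂)) / cs)
              * (x^(2*r) * x^(2*r)) := by ring
        _ = (8 * C^2 * max 1 ((2:ℝ)^(2*b₁)) * max 1 ((2:ℝ)^(2*b₂)) / cs)
              * x^(2*r + 2*r) := by rw [Real.rpow_add hx0]
    have hfin := exponent_le (2*s + 2) (2*r + 2*r)
      (8 * C^2 * max 1 ((2:ℝ)^(2*b₁)) * max 1 ((2:ℝ)^(2*b₂)) / cs)
      (div_pos (mul_pos (mul_pos (mul_pos (by norm_num) (pow_pos hC 2)) hM₁0) hM₂0) hcs0) key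
    linarith
  · -- s ≤ r
    have key : ∀ N : ℕ, 1 ≤ N →
        (1 + (N:ℝ)) ^ (2*s)
          ≤ (12 * C^2 * max 1 ((2:ℝ)^(2*b₁)) * max 1 ((2:ℝ)^(2*b₂))) * (1 + (N:ℝ)) ^ (2*r) := by
      intro N hN
      have hN1 : (1:ℝ) ≤ N := by exact_mod_cast hN
      set x := 1 + (N:ℝ) with hx
      have hx0 : (0:ℝ) < x := by positivity
      have hsb := squared_bound r s b₁ b₂ C hest hC.le 0 (N:ℤ)
      push_cast at hsb
      have e3 : (0:ℝ) - (N:ℝ) = -(N:ℝ) := by ring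
      have e4 : |(N:ℝ)^2 - (0:ℝ)^2| = (N:ℝ)^2 := by
        rw [show ((0:ℝ))^2 = 0 by norm_num, sub_zero, abs_of_nonneg (sq_nonneg _)]
      have e5 : jap (-(N:ℝ)) = x := by
        unfold jap; rw [abs_neg, abs_of_nonneg (Nat.cast_nonneg N)]
      have e6 : jap ((N:ℝ)) = x := by unfold jap; rw [abs_of_nonneg (Nat.cast_nonneg N)]
      have e7 : jap (0:ℝ) = 1 := by unfold jap; norm_num
      rw [e3, e4, e5, e6, e7, Real.one_rpow] at hsb
      have e8 : (-(N:ℝ))^2 = (N:ℝ)^2 := by ring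
      rw [e8] at hsb
      -- hsb : N^2 * x^(2s) * (2+N^2)⁻¹ ≤ C^2 * (1*M₁*2) * (x^(2r)*M₂*2)
      have hq : (1:ℝ) ≤ 3 * (N:ℝ)^2 * (2+(N:ℝ)^2)⁻¹ := by
        rw [← div_eq_mul_inv, le_div_iff₀ (by positivity)]
        nlinarith [hN1]
      have h3 : x^(2*s) ≤ 3 * ((N:ℝ)^2 * x^(2*s) * (2+(N:ℝ)^2)⁻¹) := by
        calc x^(2*s) = 1 * x^(2*s) := (one_mul _).symm
          _ ≤ (3 * (N:ℝ)^2 * (2+(N:ℝ)^2)⁻¹) * x^(2*s) :=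
              mul_le_mul_of_nonneg_right hq (Real.rpow_nonneg hx0.le _)
          _ = 3 * ((N:ℝ)^2 * x^(2*s) * (2+(N:ℝ)^2)⁻¹) := by ring
      calc x^(2*s) ≤ 3 * (C^2 * (1 * max 1 ((2:ℝ)^(2*b₁)) * 2)
            * (x^(2*r) * max 1 ((2:ℝ)^(2*b₂)) * 2)) := h3.trans (by linarith)
        _ = (12 * C^2 * max 1 ((2:ℝ)^(2*b₁)) * max 1 ((2:ℝ)^(2*b₂))) * x^(2*r) := by ring
    have hfin := exponent_le (2*s) (2*r)
      (12 * C^2 * max 1 ((2:ℝ)^(2*b₁)) * max 1 ((2:ℝ)^(2*b₂)))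
      (mul_pos (mul_pos (mul_pos (by norm_num) (pow_pos hC 2)) hM₁0) hM₂0) key
    linarith
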